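/- Let a > 0 and let R(a) ∈ (0,∞] be the first zero of f(·;a), i.e. R(a) = inf{r > 0 : f(r;a) = 0} (with R(a) = ∞ if f(·;a) has no zero). Then for every r ∈ (0,R(a)) one has 0 < f(r;a) < a and -(a r / N)^{1/(p-1)} < f'(r;a) < 0; moreover, with ρ(r) = r^{N-1} e^r, the identity d/dr [ρ(r) |f'(r;a)|^{p-2} f'(r;a)] = -ρ(r) f(r;a) holds for all r ∈ (0,R(a)). -/

import Mathlib

open Real Set Filter MeasureTheory

/-- `f` is a solution of the profile equation with parameter `a`:
`f` is C¹ on `[0,∞)` with derivative `f'`, the map `r ↦ |f'(r)|^{p-2} f'(r)` is C¹ on `[0,∞)`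
with derivative `F'`, the ODE
`(|f'|^{p-2}f')'(r) + ((N-1)/r)(|f'|^{p-2}f')(r) + f(r) - |f'(r)|^{p-1} = 0` holds for `r > 0`,
and `f 0 = a`, `f' 0 = 0`. -/
def IsProfileSol (N : ℕ) (p a : ℝ) (f f' F' : ℝ → ℝ) : Prop :=
  (∀ r ∈ Ici (0:ℝ), HasDerivWithinAt f (f' r) (Ici 0) r) ∧
  ContinuousOn f' (Ici 0) ∧
  (∀ r ∈ Ici (0:ℝ), HasDerivWithinAt (fun s => |f' s| ^ (p - 2) * f' s) (F' r) (Ici 0) r) ∧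
  ContinuousOn F' (Ici 0) ∧
  (∀ r, 0 < r →
    F' r + (((N : ℝ) - 1) / r) * (|f' r| ^ (p - 2) * f' r) + f r - |f' r| ^ (p - 1) = 0) ∧
  f 0 = a ∧ f' 0 = 0

/-- `g(r;a) = -|f'(r;a)|^{p-2} f'(r;a)`. -/
noncomputable def gFun (p : ℝ) (f' : ℝ → ℝ) (r : ℝ) : ℝ := -(|f' r| ^ (p - 2) * f' r)

/-- `ρ(r) = r^{N-1} e^r`. -/
noncomputable def rho (N : ℕ) (r : ℝ) : ℝ := r ^ (N - 1) * Real.exp r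

/-- the derivative of `ρ`. -/
noncomputable def rho' (N : ℕ) (r : ℝ) : ℝ :=
  (((N : ℝ) - 1) * r ^ (N - 2) + r ^ (N - 1)) * Real.exp r

/-- `w(r;a) = ρ(r) g(r;a)`. -/
noncomputable def wFun (N : ℕ) (p : ℝ) (f' : ℝ → ℝ) (r : ℝ) : ℝ := rho N r * gFun p f' r

/-- the derivative `w'(r;a) = ρ'(r) g(r;a) + ρ(r) g'(r;a)`, where `g' = -F'`. -/
noncomputable def wDeriv (N : ℕ) (p : ℝ) (f' F' : ℝ → ℝ) (r : ℝ) : ℝ :=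
  rho' N r * gFun p f' r - rho N r * F' r

open Topology

/-- on `(0, R(a))` (i.e. for `r > 0` such that `f(·;a)` has no zero on `(0,r]`)
one has `0 < f(r;a) < a`, `-(ar/N)^{1/(p-1)} < f'(r;a) < 0`, and
`(ρ |f'|^{p-2} f')'(r) = -ρ(r) f(r;a)`. -/
theorem stmt4 (N : ℕ) (hN : 2 ≤ N) (p : ℝ)
    (hp1 : 2 * (N : ℝ) / ((N : ℝ) + 1) < p) (hp2 : p < 2)
    (a : ℝ) (ha : 0 < a)
    (f f' F' : ℝ → ℝ) (hf : IsProfileSol N p a f f' F') :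
    ∀ r, 0 < r → (∀ s, 0 < s → s ≤ r → f s ≠ 0) →
      (0 < f r ∧ f r < a) ∧
      (-((a * r / (N : ℝ)) ^ (1 / (p - 1))) < f' r ∧ f' r < 0) ∧
      HasDerivAt (fun s => rho N s * (|f' s| ^ (p - 2) * f' s)) (-(rho N r * f r)) r := by
  obtain ⟨hfd, hf'c, hGd, hF'c, hode, hf0, hf'0⟩ := hf
  set G : ℝ → ℝ := fun s => |f' s| ^ (p - 2) * f' s with hGdef
  have hN2 : (2:ℝ) ≤ (N:ℝ) := by exact_mod_cast hN
  have hp1' : 1 < p := by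
    have h1 : (0:ℝ) < (N:ℝ) + 1 := by linarith
    have : (1:ℝ) < 2 * N / (N + 1) := by rw [lt_div_iff₀ h1]; linarith
    linarith
  have hpm1 : (0:ℝ) < p - 1 := by linarith
  have habs : ∀ x : ℝ, |x| ^ (p - 1) = |x| ^ (p - 2) * |x| := by
    intro x
    rcases eq_or_ne x 0 with h | h
    · simp [h, Real.zero_rpow (by linarith : p - 1 ≠ 0)]
    · have he : p - 1 = (p - 2) + 1 := by ring
      rw [he, Real.rpow_add_one (abs_ne_zero.mpr h)]
  have hGeq_pos : ∀ s, 0 ≤ f' s → G s = |f' s| ^ (p - 1) := by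
    intro s hs
    rw [habs, hGdef]
    simp only
    rw [abs_of_nonneg hs]
  have hGeq_neg : ∀ s, f' s ≤ 0 → G s = -(|f' s| ^ (p - 1)) := by
    intro s hs
    rw [habs, hGdef]
    simp only
    rw [abs_of_nonpos hs]
    ring
  have hfc : ContinuousOn f (Ici 0) := fun s hs => (hfd s hs).continuousWithinAt
  have hGc : ContinuousOn G (Ici 0) := fun s hs => (hGd s hs).continuousWithinAt
  have hcast : ((N - 1 : ℕ) : ℝ) = (N : ℝ) - 1 := by
    have h1 : (1:ℕ) ≤ N := by omega
    push_cast [Nat.cast_sub h1]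
    ring
  intro r hr hne
  -- Step A : positivity of f
  have hfpos : ∀ s, 0 ≤ s → s ≤ r → 0 < f s := by
    intro s hs0 hsr
    rcases hs0.lt_or_eq with hs0' | hs0'
    · by_contra hle
      push_neg at hle
      have hflt : f s < 0 := lt_of_le_of_ne hle (hne s hs0' hsr)
      have hcont : ContinuousOn f (Icc 0 s) := hfc.mono (fun x hx => hx.1)
      have hmem : (0:ℝ) ∈ Icc (f s) (f 0) := ⟨le_of_lt hflt, by rw [hf0]; linarith⟩
      obtain ⟨t, htmem, htz⟩ := intermediate_value_Icc' (le_of_lt hs0') hcont hmem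
      have ht0 : 0 < t := by
        rcases htmem.1.lt_or_eq with h | h
        · exact h
        · exfalso; rw [← h, hf0] at htz; linarith
      exact hne t ht0 (le_trans htmem.2 hsr) htz
    · rw [← hs0', hf0]; exact ha
  -- Step B : f' ≤ 0 on [0,r]
  have hf'le : ∀ s, 0 ≤ s → s ≤ r → f' s ≤ 0 := by
    by_contra hcon
    push_neg at hcon
    obtain ⟨s₀, hs₀0, hs₀r, hs₀pos⟩ := hcon
    have hs₀ : 0 < s₀ := by
      rcases hs₀0.lt_or_eq with h | h
      · exact h
      · exfalso; rw [← h, hf'0] at hs₀pos; exact lt_irrefl 0 hs₀pos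
    set S : Set ℝ := {s | s ∈ Icc 0 s₀ ∧ f' s ≤ 0} with hSdef
    have hSne : S.Nonempty := ⟨0, ⟨le_rfl, hs₀.le⟩, le_of_eq hf'0⟩
    have hSbdd : BddAbove S := ⟨s₀, fun x hx => hx.1.2⟩
    have hScl : IsClosed S := by
      have hSeq : S = Icc 0 s₀ ∩ f' ⁻¹' Iic 0 := rfl
      rw [hSeq]
      exact ContinuousOn.preimage_isClosed_of_isClosed
        (hf'c.mono (fun x hx => hx.1)) isClosed_Icc isClosed_Iic
    set s₁ := sSup S with hs₁def
    have hs₁S : s₁ ∈ S := hScl.csSup_mem hSne hSbdd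
    have hs₁0 : 0 ≤ s₁ := hs₁S.1.1
    have hs₁s₀ : s₁ < s₀ := by
      rcases hs₁S.1.2.lt_or_eq with h | h
      · exact h
      · exfalso; have := hs₁S.2; rw [h] at this; linarith
    have hmid : ∀ t, s₁ < t → t ≤ s₀ → 0 < f' t := by
      intro t h1 h2
      by_contra hle
      push_neg at hle
      have htS : t ∈ S := ⟨⟨le_trans hs₁0 h1.le, h2⟩, hle⟩
      exact absurd (le_csSup hSbdd htS) (not_le.mpr h1)
    have hf's₁ : f' s₁ = 0 := by
      rcases hs₁S.2.lt_or_eq with hlt | heq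
      · exfalso
        have hct : ContinuousWithinAt f' (Ici 0) s₁ := hf'c s₁ hs₁0
        have h1 : Tendsto f' (𝓝[>] s₁) (𝓝 (f' s₁)) :=
          hct.tendsto.mono_left (nhdsWithin_mono _ (fun x hx => le_trans hs₁0 (le_of_lt hx)))
        have hev : ∀ᶠ x in 𝓝[>] s₁, f' x < 0 := h1.eventually (eventually_lt_nhds hlt)
        have hev2 : ∀ᶠ x in 𝓝[>] s₁, x ∈ Ioc s₁ s₀ :=
          eventually_of_mem (Ioc_mem_nhdsGT hs₁s₀) (fun x hx => hx)
        obtain ⟨t, htlt, htI⟩ := (hev.and hev2).exists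
        exact absurd (hmid t htI.1 htI.2) (not_lt.mpr htlt.le)
      · exact heq
    have hGs₁ : G s₁ = 0 := by simp [hGdef, hf's₁]
    set v : ℝ → ℝ := fun s => s ^ (N - 1) * Real.exp (-s) * G s with hvdef
    have hvcont : ContinuousOn v (Icc s₁ s₀) := by
      apply ContinuousOn.mul
      · exact ((continuous_pow (N-1)).continuousOn.mul
          ((Real.continuous_exp.comp continuous_neg).continuousOn))
      · exact hGc.mono (fun x hx => le_trans hs₁0 hx.1)
    have hvderiv : ∀ t ∈ Ioo s₁ s₀, HasDerivAt v (-(t ^ (N - 1) * Real.exp (-t) * f t)) t := by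
      intro t ht
      have ht0 : 0 < t := lt_of_le_of_lt hs₁0 ht.1
      have h1 : HasDerivAt (fun s : ℝ => s ^ (N - 1)) (((N:ℝ) - 1) * t ^ (N - 2)) t := by
        have h := hasDerivAt_pow (N - 1) t
        have e2 : N - 1 - 1 = N - 2 := by omega
        rw [hcast, e2] at h
        exact h
      have h2 : HasDerivAt (fun s : ℝ => Real.exp (-s)) (-Real.exp (-t)) t := by
        have h := (hasDerivAt_neg t).exp
        simpa using h
      have h3 : HasDerivAt G (F' t) t := (hGd t (le_of_lt ht0)).hasDerivAt (Ici_mem_nhds ht0)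
      have h4 := (h1.mul h2).mul h3
      convert h4 using 1
      · rfl
      · rfl
      · rfl
      have hf't : 0 < f' t := hmid t ht.1 ht.2.le
      have hodet := hode t ht0
      rw [show |f' t| ^ (p - 2) * f' t = G t from rfl] at hodet
      have hGt : |f' t| ^ (p - 1) = G t := (hGeq_pos t hf't.le).symm
      have hF't : F' t = G t - f t - (((N:ℝ) - 1) / t) * G t := by linarith
      have hpow : t ^ (N - 1) = t ^ (N - 2) * t := by
        rw [← pow_succ]
        congr 1
        omega
      have ht0' : t ≠ 0 := ne_of_gt ht0
      simp only [Pi.mul_apply]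
      rw [hF't, hpow]
      field_simp
      ring
    have hanti : StrictAntiOn v (Icc s₁ s₀) := by
      apply strictAntiOn_of_deriv_neg (convex_Icc _ _) hvcont
      intro x hx
      rw [interior_Icc] at hx
      rw [(hvderiv x hx).deriv]
      have hx0 : 0 < x := lt_of_le_of_lt hs₁0 hx.1
      have hfx : 0 < f x := hfpos x hx0.le (le_trans hx.2.le hs₀r)
      have hp1 : 0 < x ^ (N-1) * Real.exp (-x) * f x :=
        mul_pos (mul_pos (pow_pos hx0 _) (Real.exp_pos _)) hfx
      linarith
    have h1 : v s₀ < v s₁ :=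
      hanti (left_mem_Icc.mpr hs₁s₀.le) (right_mem_Icc.mpr hs₁s₀.le) hs₁s₀
    have hvs₁ : v s₁ = 0 := by simp [hvdef, hGs₁]
    have hGs₀ : 0 < G s₀ :=
      mul_pos (Real.rpow_pos_of_pos (abs_pos.mpr (ne_of_gt hs₀pos)) _) hs₀pos
    have hvs₀ : 0 < v s₀ :=
      mul_pos (mul_pos (pow_pos hs₀ _) (Real.exp_pos _)) hGs₀
    linarith
  -- Step C : derivative identity
  have hWd : ∀ t, 0 < t → t ≤ r → HasDerivAt (fun s => rho N s * G s) (-(rho N t * f t)) t := by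
    intro t ht0 htr
    have h1 : HasDerivAt (fun s : ℝ => s ^ (N - 1)) (((N:ℝ) - 1) * t ^ (N - 2)) t := by
      have h := hasDerivAt_pow (N - 1) t
      have e2 : N - 1 - 1 = N - 2 := by omega
      rw [hcast, e2] at h
      exact h
    have h2 : HasDerivAt Real.exp (Real.exp t) t := Real.hasDerivAt_exp t
    have h3 : HasDerivAt G (F' t) t := (hGd t (le_of_lt ht0)).hasDerivAt (Ici_mem_nhds ht0)
    have h4 := (h1.mul h2).mul h3
    simp only [rho]
    convert h4 using 1
    · rfl
    · rfl
    · rfl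
    have hf't : f' t ≤ 0 := hf'le t ht0.le htr
    have hodet := hode t ht0
    rw [show |f' t| ^ (p - 2) * f' t = G t from rfl] at hodet
    have hGt : |f' t| ^ (p - 1) = -G t := by rw [hGeq_neg t hf't]; ring
    have hF't : F' t = -G t - f t - (((N:ℝ) - 1) / t) * G t := by linarith
    have hpow : t ^ (N - 1) = t ^ (N - 2) * t := by
      rw [← pow_succ]
      congr 1
      omega
    have ht0' : t ≠ 0 := ne_of_gt ht0
    simp only [Pi.mul_apply]
    rw [hF't, hpow]
    field_simp
    ring
  have hWcont : ContinuousOn (fun s => rho N s * G s) (Icc 0 r) := by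
    simp only [rho]
    exact (((continuous_pow _).mul Real.continuous_exp).continuousOn).mul
      (hGc.mono (fun x hx => hx.1))
  -- Step D : w < 0 on (0,r]
  have hWneg : ∀ t, 0 < t → t ≤ r → rho N t * G t < 0 := by
    intro t ht0 htr
    have hanti : StrictAntiOn (fun s => rho N s * G s) (Icc 0 t) := by
      apply strictAntiOn_of_deriv_neg (convex_Icc _ _)
        (hWcont.mono (Icc_subset_Icc le_rfl htr))
      intro x hx
      rw [interior_Icc] at hx
      rw [(hWd x hx.1 (le_trans hx.2.le htr)).deriv]
      have hρ : 0 < rho N x := mul_pos (pow_pos hx.1 _) (Real.exp_pos _)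
      have hfx : 0 < f x := hfpos x hx.1.le (le_trans hx.2.le htr)
      have := mul_pos hρ hfx
      linarith
    have h1 := hanti (left_mem_Icc.mpr ht0.le) (right_mem_Icc.mpr ht0.le) ht0
    simp only at h1
    have h0 : rho N 0 * G 0 = 0 := by
      have : rho N 0 = 0 := by
        simp [rho, zero_pow (show N - 1 ≠ 0 by omega)]
      rw [this, zero_mul]
    rw [h0] at h1
    exact h1
  -- Step E : f' < 0 on (0,r]
  have hf'neg : ∀ t, 0 < t → t ≤ r → f' t < 0 := by
    intro t ht0 htr
    have hW := hWneg t ht0 htr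
    have hρ : 0 < rho N t := mul_pos (pow_pos ht0 _) (Real.exp_pos _)
    have hGt : G t < 0 := by nlinarith
    rcases lt_or_ge (f' t) 0 with h | h
    · exact h
    · exfalso
      have : 0 ≤ G t := by
        rw [hGeq_pos t h]
        exact Real.rpow_nonneg (abs_nonneg _) _
      linarith
  -- Step F : f < a on (0,r]
  have hfanti : StrictAntiOn f (Icc 0 r) := by
    apply strictAntiOn_of_deriv_neg (convex_Icc _ _) (hfc.mono (fun x hx => hx.1))
    intro x hx
    rw [interior_Icc] at hx
    rw [((hfd x hx.1.le).hasDerivAt (Ici_mem_nhds hx.1)).deriv]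
    exact hf'neg x hx.1 hx.2.le
  have hflta : ∀ t, 0 < t → t ≤ r → f t < a := by
    intro t ht0 htr
    have h1 := hfanti (left_mem_Icc.mpr hr.le) ⟨ht0.le, htr⟩ ht0
    rw [hf0] at h1
    exact h1
  -- Step G : the lower bound on f'
  have hu : ∀ t ∈ Ioo (0:ℝ) r,
      HasDerivAt (fun s => rho N s * G s + (a / N) * (s ^ N * Real.exp s))
        (-(rho N t * f t) + (a / N) * ((N:ℝ) * t ^ (N - 1) * Real.exp t + t ^ N * Real.exp t))
        t := by
    intro t ht
    have h1 := hWd t ht.1 ht.2.le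
    have h2 : HasDerivAt (fun s : ℝ => s ^ N * Real.exp s)
        ((N:ℝ) * t ^ (N - 1) * Real.exp t + t ^ N * Real.exp t) t := by
      have h := (hasDerivAt_pow N t).mul (Real.hasDerivAt_exp t)
      convert h using 1
      all_goals rfl
    exact h1.add (h2.const_mul (a / N))
  have hNpos : (0:ℝ) < (N:ℝ) := by linarith
  have hucont : ContinuousOn (fun s => rho N s * G s + (a / N) * (s ^ N * Real.exp s))
      (Icc 0 r) := by
    apply hWcont.add
    exact (continuousOn_const.mul (((continuous_pow N).mul Real.continuous_exp).continuousOn))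
  have hmono : StrictMonoOn (fun s => rho N s * G s + (a / N) * (s ^ N * Real.exp s))
      (Icc 0 r) := by
    apply strictMonoOn_of_deriv_pos (convex_Icc _ _) hucont
    intro x hx
    rw [interior_Icc] at hx
    rw [(hu x hx).deriv]
    have hX : 0 < x ^ (N-1) * Real.exp x := mul_pos (pow_pos hx.1 _) (Real.exp_pos _)
    have hY : 0 < x ^ N * Real.exp x := mul_pos (pow_pos hx.1 _) (Real.exp_pos _)
    have hfx : f x < a := hflta x hx.1 hx.2.le
    have hrhoeq : rho N x = x ^ (N-1) * Real.exp x := rfl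
    rw [hrhoeq]
    have h5 : (a/N) * ((N:ℝ) * x^(N-1)*Real.exp x + x^N * Real.exp x)
        = a * (x^(N-1)*Real.exp x) + (a/N)*(x^N*Real.exp x) := by
      field_simp
    rw [h5]
    nlinarith [mul_pos hX (sub_pos.mpr hfx), mul_pos (div_pos ha hNpos) hY]
  have hur : 0 < rho N r * G r + (a / N) * (r ^ N * Real.exp r) := by
    have h1 := hmono (left_mem_Icc.mpr hr.le) (right_mem_Icc.mpr hr.le) hr
    simp only at h1
    have h0 : rho N 0 * G 0 + (a / N) * ((0:ℝ) ^ N * Real.exp 0) = 0 := by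
      simp [rho, zero_pow (show N - 1 ≠ 0 by omega), zero_pow (show N ≠ 0 by omega)]
    rw [h0] at h1
    exact h1
  have hρr : 0 < rho N r := mul_pos (pow_pos hr _) (Real.exp_pos _)
  have hGr_bound : -(a * r / N) < G r := by
    have hpowr : r ^ N = r ^ (N - 1) * r := by
      rw [← pow_succ]
      congr 1
      omega
    have h2 : rho N r * (-(a * r / N)) = -((a / N) * (r ^ N * Real.exp r)) := by
      have hrhoeq : rho N r = r ^ (N-1) * Real.exp r := rfl
      rw [hrhoeq, hpowr]
      field_simp
    have h3 : rho N r * (-(a * r / N)) < rho N r * G r := by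
      rw [h2]; linarith
    exact (mul_lt_mul_iff_right₀ hρr).mp h3
  have hf'r : f' r < 0 := hf'neg r hr le_rfl
  have habs_r : |f' r| ^ (p - 1) = -G r := by rw [hGeq_neg r hf'r.le]; ring
  have hlt : |f' r| ^ (p - 1) < a * r / N := by rw [habs_r]; linarith
  have hfinal : -((a * r / N) ^ (1 / (p - 1))) < f' r := by
    rw [neg_lt, ← abs_of_neg hf'r, one_div]
    calc |f' r| = (|f' r| ^ (p - 1)) ^ (p - 1)⁻¹ :=
          (Real.rpow_rpow_inv (abs_nonneg _) (ne_of_gt hpm1)).symm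
      _ < (a * r / N) ^ (p - 1)⁻¹ :=
          Real.rpow_lt_rpow (Real.rpow_nonneg (abs_nonneg _) _) hlt (inv_pos.mpr hpm1)
  refine ⟨⟨hfpos r hr.le le_rfl, hflta r hr le_rfl⟩, ⟨hfinal, hf'r⟩, ?_⟩
  exact hWd r hr le_rfl
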